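/- Let F : C → C be an endofunctor, a : F A → A an algebra admitting a relatively terminal coalgebra ν(a). Then a is corecursive (for every F-coalgebra b there is a unique coalgebra-to-algebra morphism from b to a) if and only if ν(a) is a terminal F-coalgebra. -/
import Mathlib


open CategoryTheory

/-- Composing a coalgebra morphism with a ca-morphism gives a ca-morphism. -/
lemma comp_ca {C : Type*} [Category C] {F : C ⥤ C}
    {a : Endofunctor.Algebra F} {N b : Endofunctor.Coalgebra F}
    {ε : N.V ⟶ a.a} (hε : ε = N.str ≫ F.map ε ≫ a.str) (g : b ⟶ N) :
    g.f ≫ ε = b.str ≫ F.map (g.f ≫ ε) ≫ a.str := by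
  conv_lhs => rw [hε]
  rw [F.map_comp]
  simp [Endofunctor.Coalgebra.Hom.h_assoc]

/-- If the algebra `a` has a relatively terminal coalgebra `N = ν(a)` (with
universal ca-morphism `ε`), then `a` is corecursive (for every coalgebra `b`
there is a unique ca-morphism from `b` to `a`) iff `N` is a terminal
`F`-coalgebra. -/
theorem corecursive_iff_relatively_terminal_is_terminal
    {C : Type*} [Category C] (F : C ⥤ C)
    (a : Endofunctor.Algebra F) (N : Endofunctor.Coalgebra F)
    (ε : N.V ⟶ a.a) (hε : ε = N.str ≫ F.map ε ≫ a.str)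
    (hN : ∀ (b : Endofunctor.Coalgebra F) (j : b.V ⟶ a.a),
      j = b.str ≫ F.map j ≫ a.str → ∃! g : b ⟶ N, g.f ≫ ε = j) :
    (∀ (b : Endofunctor.Coalgebra F),
        ∃! f : b.V ⟶ a.a, f = b.str ≫ F.map f ≫ a.str) ↔
      Nonempty (Limits.IsTerminal N) := by
  constructor
  · intro hcor
    refine ⟨Limits.IsTerminal.ofUniqueHom (fun b => ?_) (fun b m => ?_)⟩
    · exact (hN b (hcor b).choose (hcor b).choose_spec.1).choose
    · obtain ⟨j, hj, hju⟩ := hcor b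
      obtain ⟨g, hg, hgu⟩ := hN b j hj
      have hm : m.f ≫ ε = j := hju _ (comp_ca hε m)
      have hd : ((hN b (hcor b).choose (hcor b).choose_spec.1).choose).f ≫ ε
          = (hcor b).choose :=
        (hN b (hcor b).choose (hcor b).choose_spec.1).choose_spec.1
      have : (hcor b).choose = j := hju _ (hcor b).choose_spec.1
      rw [hgu m hm]
      exact (hgu _ (hd.trans this)).symm
  · rintro ⟨hT⟩ b
    refine ⟨(hT.from b).f ≫ ε, comp_ca hε _, fun j hj => ?_⟩
    obtain ⟨g, hg, -⟩ := hN b j hj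
    rw [← hg, hT.hom_ext g (hT.from b)]
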